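/- If g ∈ F and c ∈ ℝ satisfy Δ g = c • (p_1 * p_2 * ⋯ * p_n), then c = 0; hence the Δ-cohomology class of p_1⋯p_n is nonzero and, combined with the existence statement, the cohomology of the Batalin–Vilkovisky operator Δ on the polynomial model of a contractible patch is isomorphic to ℝ. -/

import Mathlib

open TensorProduct ExteriorAlgebra MvPolynomial

set_option synthInstance.maxHeartbeats 1000000
set_option maxHeartbeats 1000000

noncomputable section

/-- The coefficient algebra `F`. -/
abbrev Coef (n : ℕ) := MvPolynomial (Fin n) ℝ ⊗[ℝ] ExteriorAlgebra ℝ (Fin n → ℝ)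

/-- The operator `∂/∂p_k` on the exterior factor of `F`: left contraction with the
dual-basis functional of `Pi.single k 1`. -/
def pderC (n : ℕ) (k : Fin n) :
    ExteriorAlgebra ℝ (Fin n → ℝ) →ₗ[ℝ] ExteriorAlgebra ℝ (Fin n → ℝ) :=
  CliffordAlgebra.contractLeft (LinearMap.proj k)

/-- The Batalin–Vilkovisky operator `Δ = ∑ₖ ∂²/∂x_k∂p_k` on `F`. -/
def bv (n : ℕ) : Coef n →ₗ[ℝ] Coef n :=
  ∑ k : Fin n, TensorProduct.map (MvPolynomial.pderiv k).toLinearMap LinearMap.id ∘ₗ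
      TensorProduct.map LinearMap.id (pderC n k)

/-- The element `p_1 * p_2 * ⋯ * p_n` of `F`. -/
def pVol (n : ℕ) : Coef n :=
  (List.ofFn (fun i : Fin n => (1 : MvPolynomial (Fin n) ℝ) ⊗ₜ ι ℝ (Pi.single i (1 : ℝ)))).prod

namespace BVaux

variable (n : ℕ)

/-- Composition of the contractions `pderC n a` over a list, head applied first. -/
def L : List (Fin n) → (ExteriorAlgebra ℝ (Fin n → ℝ) →ₗ[ℝ] ExteriorAlgebra ℝ (Fin n → ℝ))
  | [] => LinearMap.id
  | a :: t => L t ∘ₗ pderC n a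

lemma pderC_pderC (k : Fin n) (x : ExteriorAlgebra ℝ (Fin n → ℝ)) :
    pderC n k (pderC n k x) = 0 :=
  CliffordAlgebra.contractLeft_contractLeft _ x

lemma pderC_comm (a k : Fin n) (x : ExteriorAlgebra ℝ (Fin n → ℝ)) :
    pderC n a (pderC n k x) = -(pderC n k (pderC n a x)) :=
  CliffordAlgebra.contractLeft_comm _ _ x

lemma L_pderC (l : List (Fin n)) (k : Fin n) (hk : k ∈ l)
    (x : ExteriorAlgebra ℝ (Fin n → ℝ)) :
    L n l (pderC n k x) = 0 := by
  induction l generalizing x with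
  | nil => simp at hk
  | cons a t ih =>
    simp only [L, LinearMap.comp_apply]
    rcases List.mem_cons.mp hk with rfl | hk'
    · rw [pderC_pderC, map_zero]
    · rw [pderC_comm, map_neg, ih hk', neg_zero]

/-- The generators of the exterior factor. -/
def e (i : Fin n) : ExteriorAlgebra ℝ (Fin n → ℝ) := ι ℝ (Pi.single i (1 : ℝ))

lemma pderC_e_mul (k a : Fin n) (x : ExteriorAlgebra ℝ (Fin n → ℝ)) :
    pderC n k (e n a * x)
      = (LinearMap.proj k : (Fin n → ℝ) →ₗ[ℝ] ℝ) (Pi.single a (1 : ℝ)) • x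
        - e n a * pderC n k x := by
  rw [pderC, e]
  exact CliffordAlgebra.contractLeft_ι_mul _ _ _

lemma pderC_prod (k : Fin n) (l : List (Fin n)) (hk : k ∉ l) :
    pderC n k ((l.map (e n)).prod) = 0 := by
  induction l with
  | nil => simpa [pderC] using CliffordAlgebra.contractLeft_one _ _
  | cons a t ih =>
    have hak : a ≠ k := fun h => hk (h ▸ (List.mem_cons_self : a ∈ a :: t))
    have hkt : k ∉ t := fun h => hk (List.mem_cons_of_mem _ h)
    simp [List.map_cons, List.prod_cons, pderC_e_mul, LinearMap.proj_apply,
      Pi.single_apply, hak, ih hkt]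

lemma L_prod (l : List (Fin n)) (hl : l.Nodup) :
    L n l ((l.map (e n)).prod) = 1 := by
  induction l with
  | nil => simp [L]
  | cons a t ih =>
    have hat : a ∉ t := (List.nodup_cons.mp hl).1
    have ht : t.Nodup := (List.nodup_cons.mp hl).2
    simp only [List.map_cons, List.prod_cons, L, LinearMap.comp_apply]
    rw [pderC_e_mul, pderC_prod n a t hat, mul_zero, sub_zero]
    simp only [LinearMap.proj_apply, Pi.single_eq_same, one_smul]
    exact ih ht

/-- The Berezin-integral functional on the exterior factor. -/
def ε₂ : ExteriorAlgebra ℝ (Fin n → ℝ) →ₗ[ℝ] ℝ :=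
  (ExteriorAlgebra.algebraMapInv).toLinearMap ∘ₗ L n (List.finRange n)

/-- Evaluation at `0` on the polynomial factor. -/
def ε₁ : MvPolynomial (Fin n) ℝ →ₗ[ℝ] ℝ :=
  (MvPolynomial.aeval (fun _ : Fin n => (0 : ℝ))).toLinearMap

/-- The total functional on `Coef n`. -/
def Ψ : Coef n →ₗ[ℝ] ℝ :=
  (TensorProduct.lid ℝ ℝ).toLinearMap ∘ₗ TensorProduct.map (ε₁ n) (ε₂ n)

lemma ε₂_pderC (k : Fin n) (x : ExteriorAlgebra ℝ (Fin n → ℝ)) :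
    ε₂ n (pderC n k x) = 0 := by
  simp [ε₂, L_pderC n (List.finRange n) k (List.mem_finRange k) x]

lemma Ψ_comp (k : Fin n) :
    Ψ n ∘ₗ (TensorProduct.map (MvPolynomial.pderiv k).toLinearMap LinearMap.id ∘ₗ
      TensorProduct.map LinearMap.id (pderC n k)) = 0 := by
  apply TensorProduct.ext'
  intro f x
  simp [Ψ, ε₂_pderC]

lemma Ψ_bv (g : Coef n) : Ψ n (bv n g) = 0 := by
  rw [bv, LinearMap.sum_apply, map_sum]
  exact Finset.sum_eq_zero fun k _ => by
    simpa using DFunLike.congr_fun (Ψ_comp n k) g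

lemma tmul_prod (l : List (Fin n)) :
    (l.map (fun i => (1 : MvPolynomial (Fin n) ℝ) ⊗ₜ[ℝ] e n i)).prod
      = (1 : MvPolynomial (Fin n) ℝ) ⊗ₜ[ℝ] (l.map (e n)).prod := by
  induction l with
  | nil => rfl
  | cons a t ih =>
    simp only [List.map_cons, List.prod_cons, ih, Algebra.TensorProduct.tmul_mul_tmul, one_mul]

lemma Ψ_pVol : Ψ n (pVol n) = 1 := by
  have hv : pVol n = (1 : MvPolynomial (Fin n) ℝ) ⊗ₜ[ℝ] ((List.finRange n).map (e n)).prod := by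
    rw [pVol, List.ofFn_eq_map]
    exact tmul_prod n (List.finRange n)
  rw [hv]
  simp [Ψ, ε₁, ε₂, L_prod n (List.finRange n) (List.nodup_finRange n)]

end BVaux

/-- If `g ∈ F` and `c ∈ ℝ` satisfy `Δ g = c • (p_1 * p_2 * ⋯ * p_n)`, then
`c = 0`; hence the `Δ`-cohomology class of `p_1⋯p_n` is nonzero. -/
theorem bv_class_nonzero (n : ℕ) (hn : 1 ≤ n) (g : Coef n) (c : ℝ)
    (h : bv n g = c • pVol n) :
    c = 0 := by
  have := congrArg (BVaux.Ψ n) h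
  rw [BVaux.Ψ_bv, map_smul, BVaux.Ψ_pVol, smul_eq_mul, mul_one] at this
  exact this.symm
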